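/- Every finite solvable group G belongs to the class F: for every factorization |G| = a·b there exist subsets A, B of G with |A| = a, |B| = b, and G = AB. -/

import Mathlib

def IsFactorization {G : Type*} [Group G] (A B : Finset G) : Prop :=
  ∀ g : G, ∃! p : G × G, p.1 ∈ A ∧ p.2 ∈ B ∧ p.1 * p.2 = g

def InF (G : Type*) [Group G] : Prop :=
  ∀ a b : ℕ, a * b = Nat.card G →
    ∃ A B : Finset G, A.card = a ∧ B.card = b ∧ IsFactorization A B

section Aux

open Subgroup

variable {G : Type*} [Group G]

lemma isFactorization_inv [DecidableEq G] {A B : Finset G} (h : IsFactorization A B) :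
    IsFactorization (B.image (·⁻¹)) (A.image (·⁻¹)) := by
  intro g
  obtain ⟨⟨x, y⟩, ⟨hx, hy, hxy⟩, huniq⟩ := h g⁻¹
  refine ⟨(y⁻¹, x⁻¹), ⟨Finset.mem_image_of_mem _ hy, Finset.mem_image_of_mem _ hx, ?_⟩, ?_⟩
  · show y⁻¹ * x⁻¹ = g
    rw [← inv_inv g, ← hxy]
    group
  rintro ⟨u, v⟩ ⟨hu, hv, huv⟩
  obtain ⟨y', hy', rfl⟩ := Finset.mem_image.mp hu
  obtain ⟨x', hx', rfl⟩ := Finset.mem_image.mp hv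
  have h2 : x' * y' = g⁻¹ := by
    have huv' : y'⁻¹ * x'⁻¹ = g := huv
    rw [← huv']
    group
  have := huniq (x', y') ⟨hx', hy', h2⟩
  have h3 : x' = x := congrArg Prod.fst this
  have h4 : y' = y := congrArg Prod.snd this
  rw [h3, h4]

lemma commutator_ne_top_of_solvable [Nontrivial G] [Group.IsSolvable G] :
    commutator G ≠ ⊤ := by
  intro h
  have hall : ∀ n, derivedSeries G n = ⊤ := by
    intro n
    induction n with
    | zero => rfl
    | succ n ih => rw [derivedSeries_succ, ih, ← commutator_def, h]
  obtain ⟨n, hn⟩ := Group.IsSolvable.solvable (G := G)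
  rw [hall n] at hn
  exact top_ne_bot hn

lemma exists_normal_prime_index [Finite G] [Nontrivial G] [Group.IsSolvable G] :
    ∃ N : Subgroup G, N.Normal ∧ N.index.Prime := by
  classical
  let Q := Abelianization G
  have hQnt : Nontrivial Q := by
    obtain ⟨x, hx⟩ : ∃ x : G, x ∉ commutator G := by
      by_contra h'
      push_neg at h'
      exact commutator_ne_top_of_solvable (Subgroup.eq_top_iff' _ |>.mpr h')
    refine ⟨Abelianization.of x, 1, fun h => hx ?_⟩
    exact (QuotientGroup.eq_one_iff x).mp h
  -- find a coatom in the subgroup lattice of Q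
  obtain ⟨M, hM, -⟩ :=
    (eq_top_or_exists_le_coatom (⊥ : Subgroup Q)).resolve_left bot_ne_top
  haveI hMn : M.Normal := Subgroup.normal_of_comm M
  haveI : Nontrivial (Q ⧸ M) := by
    obtain ⟨x, hx⟩ : ∃ x : Q, x ∉ M := by
      by_contra h'
      push_neg at h'
      exact hM.1 (Subgroup.eq_top_iff' _ |>.mpr h')
    exact ⟨QuotientGroup.mk x, 1, fun h => hx ((QuotientGroup.eq_one_iff x).mp h)⟩
  haveI : IsSimpleGroup (Q ⧸ M) := by
    constructor
    intro H _
    have hle : M ≤ Subgroup.comap (QuotientGroup.mk' M) H := by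
      intro m hm
      have h1 : QuotientGroup.mk' M m = 1 := (QuotientGroup.eq_one_iff m).mpr hm
      show QuotientGroup.mk' M m ∈ H
      rw [h1]
      exact H.one_mem
    have hmap : Subgroup.map (QuotientGroup.mk' M) (Subgroup.comap (QuotientGroup.mk' M) H) = H :=
      Subgroup.map_comap_eq_self_of_surjective (QuotientGroup.mk'_surjective M) H
    rcases hle.lt_or_eq with hlt | heq
    · right
      have : Subgroup.comap (QuotientGroup.mk' M) H = ⊤ := hM.2 _ hlt
      rw [← hmap, this]
      exact Subgroup.map_top_of_surjective _ (QuotientGroup.mk'_surjective M)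
    · left
      rw [← hmap, ← heq]
      rw [eq_bot_iff]
      rintro x ⟨m, hm, rfl⟩
      simpa using (QuotientGroup.eq_one_iff m).mpr hm
  have hprime : (Nat.card (Q ⧸ M)).Prime := IsSimpleGroup.prime_card
  -- pull back to G
  let φ : G →* Q ⧸ M := (QuotientGroup.mk' M).comp Abelianization.of
  have hφ : Function.Surjective φ := by
    intro q
    obtain ⟨y, rfl⟩ := QuotientGroup.mk'_surjective M q
    obtain ⟨x, rfl⟩ : ∃ x : G, Abelianization.of x = y := by
      refine QuotientGroup.induction_on y fun x => ⟨x, rfl⟩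
    exact ⟨x, rfl⟩
  refine ⟨φ.ker, MonoidHom.normal_ker φ, ?_⟩
  have h2 : φ.ker.index = Nat.card φ.range := Subgroup.index_ker φ
  rw [MonoidHom.range_eq_top.mpr hφ] at h2
  rw [h2, Nat.card_congr Subgroup.topEquiv.toEquiv]
  exact hprime

lemma step [Finite G] (N : Subgroup G) [hNn : N.Normal]
    (hp : N.index.Prime) (hN : InF ↥N) (a₁ b : ℕ) (h : a₁ * b = Nat.card ↥N) :
    ∃ A B : Finset G, A.card = N.index * a₁ ∧ B.card = b ∧ IsFactorization A B := by
  classical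
  obtain ⟨A₁, B₁, hA₁, hB₁, hfac⟩ := hN a₁ b h
  set p := N.index with hpdef
  have hcardQ : Nat.card (G ⧸ N) = p := (Subgroup.index_eq_card N).symm
  obtain ⟨t, ht⟩ : ∃ t : G, t ∉ N := by
    by_contra h'
    push_neg at h'
    have hTop : N = ⊤ := Subgroup.eq_top_iff' _ |>.mpr h'
    have h1 : p = 1 := by rw [hpdef, hTop, Subgroup.index_top]
    exact hp.ne_one h1
  have htne : (QuotientGroup.mk t : G ⧸ N) ≠ 1 := by
    simpa [QuotientGroup.eq_one_iff] using ht
  have hord : orderOf (QuotientGroup.mk t : G ⧸ N) = p := by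
    have hd : orderOf (QuotientGroup.mk t : G ⧸ N) ∣ p := hcardQ ▸ orderOf_dvd_natCard _
    rcases hp.eq_one_or_self_of_dvd _ hd with h1 | h1
    · exact absurd (orderOf_eq_one_iff.mp h1) htne
    · exact h1
  have hz : Subgroup.zpowers (QuotientGroup.mk t : G ⧸ N) = ⊤ := by
    apply Subgroup.eq_top_of_card_eq
    rw [Nat.card_zpowers, hord, hcardQ]
  have key : ∀ g : G, ∃ i : ℕ, i < p ∧
      (QuotientGroup.mk t : G ⧸ N) ^ i = (QuotientGroup.mk g : G ⧸ N) := by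
    intro g
    have hq : (QuotientGroup.mk g : G ⧸ N) ∈ Submonoid.powers (QuotientGroup.mk t : G ⧸ N) := by
      rw [mem_powers_iff_mem_zpowers, hz]
      trivial
    obtain ⟨n, hn⟩ := hq
    refine ⟨n % p, Nat.mod_lt _ hp.pos, ?_⟩
    rw [← hord, pow_mod_orderOf]
    exact hn
  have keyuniq : ∀ i j : ℕ, i < p → j < p →
      (QuotientGroup.mk t : G ⧸ N) ^ i = (QuotientGroup.mk t : G ⧸ N) ^ j → i = j := by
    intro i j hi hj hij
    exact pow_injOn_Iio_orderOf (by simpa [hord] using hi) (by simpa [hord] using hj) hij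
  -- mk of products
  have hmk : ∀ (i : ℕ) (x : ↥N),
      (QuotientGroup.mk (t ^ i * (x : G)) : G ⧸ N) = (QuotientGroup.mk t : G ⧸ N) ^ i := by
    intro i x
    have hx1 : (QuotientGroup.mk (x : G) : G ⧸ N) = 1 := (QuotientGroup.eq_one_iff _).mpr x.2
    rw [QuotientGroup.mk_mul, QuotientGroup.mk_pow, hx1, mul_one]
  refine ⟨(Finset.range p ×ˢ A₁).image (fun x : ℕ × ↥N => t ^ x.1 * (x.2 : G)),
    B₁.map ⟨((↑) : ↥N → G), Subtype.coe_injective⟩, ?_, ?_, ?_⟩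
  · rw [Finset.card_image_of_injOn, Finset.card_product, Finset.card_range, hA₁]
    rintro ⟨i, x⟩ hix ⟨j, y⟩ hjy hxy
    simp only [Finset.mem_coe, Finset.mem_product, Finset.mem_range] at hix hjy
    have hxy' : t ^ i * (x : G) = t ^ j * (y : G) := hxy
    have hq : (QuotientGroup.mk t : G ⧸ N) ^ i = (QuotientGroup.mk t : G ⧸ N) ^ j := by
      rw [← hmk i x, ← hmk j y, hxy']
    have hij : i = j := keyuniq i j hix.1 hjy.1 hq
    subst hij
    have hxyv : (x : G) = (y : G) := mul_left_cancel hxy'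
    exact Prod.ext rfl (Subtype.ext hxyv)
  · rw [Finset.card_map, hB₁]
  · intro g
    obtain ⟨i, hip, hi⟩ := key g
    have hnmem : (t ^ i)⁻¹ * g ∈ N := by
      rw [← QuotientGroup.eq_one_iff]
      rw [QuotientGroup.mk_mul, QuotientGroup.mk_inv, QuotientGroup.mk_pow, hi]
      simp
    set n : ↥N := ⟨(t ^ i)⁻¹ * g, hnmem⟩ with hn
    obtain ⟨⟨x, y⟩, ⟨hx, hy, hxy⟩, huniq⟩ := hfac n
    have hxyG : (x : G) * (y : G) = (t ^ i)⁻¹ * g := by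
      have := congrArg (Subtype.val) hxy
      simpa using this
    refine ⟨(t ^ i * (x : G), (y : G)), ⟨?_, ?_, ?_⟩, ?_⟩
    · exact Finset.mem_image.mpr ⟨(i, x), Finset.mem_product.mpr
        ⟨Finset.mem_range.mpr hip, hx⟩, rfl⟩
    · exact Finset.mem_map.mpr ⟨y, hy, rfl⟩
    · simp only
      rw [mul_assoc, hxyG]
      group
    · rintro ⟨u, v⟩ ⟨hu, hv, huv⟩
      obtain ⟨⟨j, x'⟩, hmem, rfl⟩ := Finset.mem_image.mp hu
      obtain ⟨y', hy', rfl⟩ := Finset.mem_map.mp hv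
      simp only [Finset.mem_product, Finset.mem_range] at hmem
      simp only [Function.Embedding.coeFn_mk] at huv ⊢
      have hy1 : (QuotientGroup.mk ((y' : G)) : G ⧸ N) = 1 := (QuotientGroup.eq_one_iff _).mpr y'.2
      have hqj : (QuotientGroup.mk t : G ⧸ N) ^ j = (QuotientGroup.mk g : G ⧸ N) := by
        rw [← huv, QuotientGroup.mk_mul, hmk j x', hy1, mul_one]
      have hij : j = i := keyuniq j i hmem.1 hip (hqj.trans hi.symm)
      subst hij
      have hx'y' : (x' : G) * (y' : G) = (t ^ j)⁻¹ * g := by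
        rw [← huv]
        group
      have : (x', y') = (x, y) := huniq (x', y')
        ⟨hmem.2, hy', Subtype.ext (by rw [hn]; simpa using hx'y')⟩
      have h3 : x' = x := congrArg Prod.fst this
      have h4 : y' = y := congrArg Prod.snd this
      rw [h3, h4]

lemma inF_aux : ∀ (n : ℕ) (G : Type u) [Group G] [Finite G] [Group.IsSolvable G],
    Nat.card G = n → InF G := by
  intro n
  induction n using Nat.strong_induction_on with
  | _ n ih =>
    intro G _ _ _ hn
    classical
    rcases subsingleton_or_nontrivial G with hs | hs
    · intro a b hab
      have h1 : Nat.card G = 1 := Nat.card_eq_one_iff_unique.mpr ⟨inferInstance, inferInstance⟩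
      rw [h1] at hab
      have ha : a = 1 := Nat.eq_one_of_mul_eq_one_right hab
      have hb : b = 1 := Nat.eq_one_of_mul_eq_one_left hab
      subst ha
      subst hb
      refine ⟨{1}, {1}, Finset.card_singleton 1, Finset.card_singleton 1, ?_⟩
      intro g
      refine ⟨(1, 1), ⟨Finset.mem_singleton_self 1, Finset.mem_singleton_self 1,
        Subsingleton.elim _ _⟩, ?_⟩
      rintro ⟨u, v⟩ ⟨hu, hv, -⟩
      exact Prod.ext (Finset.mem_singleton.mp hu) (Finset.mem_singleton.mp hv)
    · obtain ⟨N, hNn, hp⟩ := exists_normal_prime_index (G := G)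
      haveI := hNn
      set p := N.index with hpdef
      have hcard : Nat.card ↥N * p = Nat.card G := Subgroup.card_mul_index N
      have hNlt : Nat.card ↥N < n := by
        rw [← hn, ← hcard]
        have h1 : 0 < Nat.card ↥N := Nat.card_pos
        exact (Nat.lt_mul_iff_one_lt_right h1).mpr hp.one_lt
      have hNsolv : Group.IsSolvable ↥N := inferInstance
      have hNinF : InF ↥N := ih (Nat.card ↥N) (hn ▸ hNlt) ↥N rfl
      intro a b hab
      by_cases hpa : p ∣ a
      · obtain ⟨a₁, rfl⟩ := hpa
        have h1 : a₁ * b = Nat.card ↥N := by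
          have h2 : p * (a₁ * b) = p * Nat.card ↥N := by
            calc p * (a₁ * b) = p * a₁ * b := by ring
              _ = Nat.card G := hab
              _ = Nat.card ↥N * p := hcard.symm
              _ = p * Nat.card ↥N := mul_comm _ _
          exact Nat.eq_of_mul_eq_mul_left hp.pos h2
        obtain ⟨A, B, hA, hB, hfac⟩ := step N hp hNinF a₁ b h1
        exact ⟨A, B, hA, hB, hfac⟩
      · have hpb : p ∣ b := by
          have hpd : p ∣ a * b := by
            rw [hab, ← hcard]
            exact dvd_mul_left p _
          exact (hp.dvd_mul.mp hpd).resolve_left hpa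
        obtain ⟨b₁, rfl⟩ := hpb
        have h1 : b₁ * a = Nat.card ↥N := by
          have h2 : p * (b₁ * a) = p * Nat.card ↥N := by
            calc p * (b₁ * a) = a * (p * b₁) := by ring
              _ = Nat.card G := hab
              _ = Nat.card ↥N * p := hcard.symm
              _ = p * Nat.card ↥N := mul_comm _ _
          exact Nat.eq_of_mul_eq_mul_left hp.pos h2
        obtain ⟨A', B', hA', hB', hfac'⟩ := step N hp hNinF b₁ a h1
        refine ⟨B'.image (·⁻¹), A'.image (·⁻¹), ?_, ?_, isFactorization_inv hfac'⟩
        · rw [Finset.card_image_of_injective _ inv_injective, hB']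
        · rw [Finset.card_image_of_injective _ inv_injective, hA']

end Aux

theorem inF_of_solvable (G : Type*) [Group G] [Fintype G] [Group.IsSolvable G] :
    InF G := by
  exact inF_aux (Nat.card G) G rfl
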